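/- Let τ be an infinite cardinal and let {X_α : α < τ} be a family of subcompact Hausdorff spaces, each with more than one point. Then the product X = ∏{X_α : α < τ} is strictly a_τ-subcompact. -/

import Mathlib

open Cardinal Topology

universe u

/-- A Hausdorff space is *subcompact* if it admits a condensation (continuous bijection)
onto a compact Hausdorff space. -/
def Subcompact (X : Type u) [TopologicalSpace X] : Prop :=
  ∃ (Y : Type u) (_ : TopologicalSpace Y), CompactSpace Y ∧ T2Space Y ∧
    ∃ f : X → Y, Continuous f ∧ Function.Bijective f

/-- A compact Hausdorff space `X` is an `a_τ`-space if for every `C ⊆ X` with `#C ≤ τ`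
there is a condensation from the subspace `X \ C` onto a compact Hausdorff space. -/
def ATauSpace (τ : Cardinal.{u}) (X : Type u) [TopologicalSpace X] : Prop :=
  CompactSpace X ∧ T2Space X ∧ ∀ C : Set X, #C ≤ τ → Subcompact ↥(Cᶜ)

/-- A compact Hausdorff space `X` is a strictly `a_τ`-space if for every `C ⊆ X` with
`#C ≤ τ` there is a condensation from `X \ C` onto a compact Hausdorff space `K`
extending to a continuous map `X → K` (encoded: a continuous `g : X → K` whose
restriction to `X \ C` is bijective). -/
def StrictATauSpace (τ : Cardinal.{u}) (X : Type u) [TopologicalSpace X] : Prop :=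
  CompactSpace X ∧ T2Space X ∧ ∀ C : Set X, #C ≤ τ →
    ∃ (K : Type u) (_ : TopologicalSpace K), CompactSpace K ∧ T2Space K ∧
      ∃ g : X → K, Continuous g ∧ Function.Bijective fun x : ↥(Cᶜ) => g x

/-- A Hausdorff space `X` is `a_τ`-subcompact if for every `C ⊆ X` with `#C ≤ τ` there
is a condensation from `X \ C` onto an `a_τ`-space. -/
def ATauSubcompact (τ : Cardinal.{u}) (X : Type u) [TopologicalSpace X] : Prop :=
  ∀ C : Set X, #C ≤ τ →
    ∃ (Y : Type u) (_ : TopologicalSpace Y), ATauSpace τ Y ∧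
      ∃ f : ↥(Cᶜ) → Y, Continuous f ∧ Function.Bijective f

/-- A Hausdorff space `X` is strictly `a_τ`-subcompact if for every `C ⊆ X` with `#C ≤ τ`
there is a condensation from `X \ C` onto a strictly `a_τ`-space `Y` extending to a
continuous map `X → Y`. -/
def StrictATauSubcompact (τ : Cardinal.{u}) (X : Type u) [TopologicalSpace X] : Prop :=
  ∀ C : Set X, #C ≤ τ →
    ∃ (Y : Type u) (_ : TopologicalSpace Y), StrictATauSpace τ Y ∧
      ∃ g : X → Y, Continuous g ∧ Function.Bijective fun x : ↥(Cᶜ) => g x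

/-- A Hausdorff space `X` is almost strictly `a_τ`-subcompact if for every `C ⊆ X` with
`#C ≤ τ` there is a condensation from `X \ C` onto a compact Hausdorff space `Y`
extending to a continuous map `X → Y`. -/
def AlmostStrictATauSubcompact (τ : Cardinal.{u}) (X : Type u) [TopologicalSpace X] : Prop :=
  ∀ C : Set X, #C ≤ τ →
    ∃ (Y : Type u) (_ : TopologicalSpace Y), CompactSpace Y ∧ T2Space Y ∧
      ∃ g : X → Y, Continuous g ∧ Function.Bijective fun x : ↥(Cᶜ) => g x


open Filter Set

section Machine

set_option linter.unusedSectionVars false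

variable {Z : Type u} [TopologicalSpace Z]

/-- The equivalence relation collapsing each `c ∈ C` with its partner `E c`. -/
def relOf (C : Set Z) (E : Z → Z) (z w : Z) : Prop :=
  z = w ∨ (z ∈ C ∧ w ∈ C ∧ E z = E w) ∨ (z ∈ C ∧ w = E z) ∨ (w ∈ C ∧ z = E w)

theorem relOf_refl (C : Set Z) (E : Z → Z) (z : Z) : relOf C E z z := Or.inl rfl

theorem relOf_symm {C : Set Z} {E : Z → Z} {z w : Z} (h : relOf C E z w) : relOf C E w z := by
  rcases h with h | ⟨h1, h2, h3⟩ | ⟨h1, h2⟩ | ⟨h1, h2⟩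
  · exact Or.inl h.symm
  · exact Or.inr (Or.inl ⟨h2, h1, h3.symm⟩)
  · exact Or.inr (Or.inr (Or.inr ⟨h1, h2⟩))
  · exact Or.inr (Or.inr (Or.inl ⟨h1, h2⟩))

theorem relOf_trans {C : Set Z} {E : Z → Z} (hE : ∀ c ∈ C, E c ∉ C) {z w v : Z}
    (h1 : relOf C E z w) (h2 : relOf C E w v) : relOf C E z v := by
  rcases h1 with rfl | ⟨hz, hw, hzw⟩ | ⟨hz, rfl⟩ | ⟨hw, rfl⟩
  · exact h2
  · rcases h2 with rfl | ⟨_, hv, hwv⟩ | ⟨_, rfl⟩ | ⟨hv, hwv⟩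
    · exact Or.inr (Or.inl ⟨hz, hw, hzw⟩)
    · exact Or.inr (Or.inl ⟨hz, hv, hzw.trans hwv⟩)
    · exact Or.inr (Or.inr (Or.inl ⟨hz, hzw.symm⟩))
    · exact absurd (hwv ▸ hw) (hE v hv)
  · rcases h2 with rfl | ⟨hw, _, _⟩ | ⟨hw, _⟩ | ⟨hv, hwv⟩
    · exact Or.inr (Or.inr (Or.inl ⟨hz, rfl⟩))
    · exact absurd hw (hE z hz)
    · exact absurd hw (hE z hz)
    · exact Or.inr (Or.inl ⟨hz, hv, hwv⟩)
  · rcases h2 with rfl | ⟨_, hv, hwv⟩ | ⟨_, rfl⟩ | ⟨hv, hwv⟩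
    · exact Or.inr (Or.inr (Or.inr ⟨hw, rfl⟩))
    · exact Or.inr (Or.inr (Or.inr ⟨hv, hwv ▸ rfl⟩))
    · exact Or.inl rfl
    · exact absurd (hwv ▸ hw) (hE v hv)

/-- The setoid associated to `relOf`. -/
def setoidOf (C : Set Z) (E : Z → Z) (hE : ∀ c ∈ C, E c ∉ C) : Setoid Z :=
  ⟨relOf C E, ⟨relOf_refl C E, relOf_symm, relOf_trans hE⟩⟩

theorem setoidOf_rel_iff {C : Set Z} {E : Z → Z} (hE : ∀ c ∈ C, E c ∉ C) {z w : Z} :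
    Quotient.mk (setoidOf C E hE) z = Quotient.mk (setoidOf C E hE) w ↔ relOf C E z w :=
  ⟨fun h => Quotient.eq.mp h, fun h => Quotient.sound h⟩

/-- The quotient of a compact Hausdorff space by a closed equivalence relation is Hausdorff. -/
theorem t2_quotient_of_isClosed [CompactSpace Z] [T2Space Z] (s : Setoid Z)
    (hcl : IsClosed {p : Z × Z | s.r p.1 p.2}) : T2Space (Quotient s) := by
  set q : Z → Quotient s := Quotient.mk s with hqdef
  have hqcont : Continuous q := continuous_quot_mk
  have hqsurj : Function.Surjective q := Quot.exists_rep
  have hsat : ∀ F : Set Z, q ⁻¹' (q '' F) =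
      Prod.fst '' ({p : Z × Z | s.r p.1 p.2} ∩ (Set.univ ×ˢ F)) := by
    intro F
    ext z
    constructor
    · rintro ⟨w, hwF, hqw⟩
      exact ⟨(z, w), ⟨Quotient.eq.mp hqw.symm, ⟨trivial, hwF⟩⟩, rfl⟩
    · rintro ⟨⟨z', w⟩, ⟨hr, ⟨-, hwF⟩⟩, rfl⟩
      exact ⟨w, hwF, (Quotient.sound hr).symm⟩
  have hclosedmap : ∀ F : Set Z, IsClosed F → IsClosed (q '' F) := by
    intro F hF
    rw [← (isQuotientMap_quotient_mk' (s := s)).isClosed_preimage]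
    rw [show @Quotient.mk' Z s ⁻¹' (q '' F) = q ⁻¹' (q '' F) from rfl, hsat F]
    exact (((hcl.inter (isClosed_univ.prod hF)).isCompact).image continuous_fst).isClosed
  have hclassclosed : ∀ z : Z, IsClosed (q ⁻¹' {q z}) := by
    intro z
    have : q ⁻¹' {q z} = (fun w => (w, z)) ⁻¹' {p : Z × Z | s.r p.1 p.2} := by
      ext w
      simp only [Set.mem_preimage, Set.mem_singleton_iff, Set.mem_setOf_eq]
      exact ⟨fun h => Quotient.eq.mp h, fun h => Quotient.sound h⟩
    rw [this]
    exact hcl.preimage (continuous_id.prodMk continuous_const)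
  constructor
  intro x y hxy
  obtain ⟨z, rfl⟩ := hqsurj x
  obtain ⟨w, rfl⟩ := hqsurj y
  have hdisj : Disjoint (q ⁻¹' {q z}) (q ⁻¹' {q w}) := by
    rw [Set.disjoint_left]
    rintro a ha hb
    exact hxy (by rw [← Set.mem_singleton_iff.mp ha, ← Set.mem_singleton_iff.mp hb])
  obtain ⟨U, V, hU, hV, hAU, hBV, hUV⟩ :=
    NormalSpace.normal _ _ (hclassclosed z) (hclassclosed w) hdisj
  refine ⟨(q '' Uᶜ)ᶜ, (q '' Vᶜ)ᶜ, (hclosedmap _ hU.isClosed_compl).isOpen_compl,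
    (hclosedmap _ hV.isClosed_compl).isOpen_compl, ?_, ?_, ?_⟩
  · rintro ⟨a, ha, hqa⟩
    exact ha (hAU (by simp [Set.mem_preimage, hqa]))
  · rintro ⟨a, ha, hqa⟩
    exact ha (hBV (by simp [Set.mem_preimage, hqa]))
  · rw [Set.disjoint_left]
    rintro c hc1 hc2
    obtain ⟨a, rfl⟩ := hqsurj c
    have haU : a ∈ U := by
      by_contra h
      exact hc1 ⟨a, h, rfl⟩
    have haV : a ∈ V := by
      by_contra h
      exact hc2 ⟨a, h, rfl⟩
    exact Set.disjoint_left.mp hUV haU haV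

end Machine
section Machine2

set_option linter.unusedSectionVars false

variable {Z : Type u} [TopologicalSpace Z] [CompactSpace Z] [T2Space Z]

theorem aux_principal {C : Set Z} {E : Z → Z} {V : Ultrafilter Z} {x y c : Z}
    (hc : {c} ∈ V) (hCV : C ∈ V) (hVx : ↑V ≤ 𝓝 x) (hVy : Filter.Tendsto E ↑V (𝓝 y)) :
    x = c ∧ c ∈ C ∧ y = E c := by
  have hcC : c ∈ C := by
    obtain ⟨z, hz1, hz2⟩ := Filter.nonempty_of_mem (V.inter_mem hc hCV)
    rwa [Set.mem_singleton_iff.mp hz1] at hz2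
  have hxc : x = c := by
    have : x ∈ closure ({c} : Set Z) := mem_closure_iff_ultrafilter.mpr ⟨V, hc, hVx⟩
    rwa [closure_singleton, Set.mem_singleton_iff] at this
  have hyEc : y = E c := by
    have heq : E =ᶠ[↑V] fun _ => E c := by
      filter_upwards [hc] with z hz
      rw [Set.mem_singleton_iff.mp hz]
    exact tendsto_nhds_unique (hVy.congr' heq) tendsto_const_nhds
  exact ⟨hxc, hcC, hyEc⟩

/-- `relOf C E` is closed provided the ultrafilter condition `H` holds. -/
theorem relOf_isClosed {C : Set Z} {E : Z → Z}
    (H : ∀ (V : Ultrafilter Z) (x y : Z), C ∈ V → ↑V ≤ 𝓝 x → Filter.Tendsto E ↑V (𝓝 y) →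
      (x ∈ C ∧ y = E x) ∨ x = y) :
    IsClosed {p : Z × Z | relOf C E p.1 p.2} := by
  rw [← closure_subset_iff_isClosed]
  rintro ⟨x, y⟩ hp
  obtain ⟨U, hRU, hU⟩ := mem_closure_iff_ultrafilter.mp hp
  have hUx : Filter.Tendsto Prod.fst (↑U) (𝓝 x) :=
    (continuous_fst.tendsto (x, y)).mono_left hU
  have hUy : Filter.Tendsto Prod.snd (↑U) (𝓝 y) :=
    (continuous_snd.tendsto (x, y)).mono_left hU
  have hsplit : {p : Z × Z | relOf C E p.1 p.2} =
      {p : Z × Z | p.1 = p.2} ∪ ({p : Z × Z | p.1 ∈ C ∧ p.2 ∈ C ∧ E p.1 = E p.2} ∪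
        ({p : Z × Z | p.1 ∈ C ∧ p.2 = E p.1} ∪ {p : Z × Z | p.2 ∈ C ∧ p.1 = E p.2})) := by
    ext p; rfl
  rw [hsplit] at hRU
  show relOf C E x y
  rcases (Ultrafilter.union_mem_iff.mp hRU) with hΔ | hrest
  · -- diagonal case
    have heq : (Prod.fst : Z × Z → Z) =ᶠ[↑U] Prod.snd := by
      filter_upwards [hΔ] with p hp
      exact hp
    exact Or.inl (tendsto_nhds_unique hUx (hUy.congr' heq.symm))
  rcases (Ultrafilter.union_mem_iff.mp hrest) with hQ | hrest2
  · -- kernel case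
    have hCV1 : C ∈ U.map Prod.fst := by
      rw [Ultrafilter.mem_map]; exact Filter.mem_of_superset hQ fun p hp => hp.1
    have hCV2 : C ∈ U.map Prod.snd := by
      rw [Ultrafilter.mem_map]; exact Filter.mem_of_superset hQ fun p hp => hp.2.1
    obtain ⟨m, -, hm⟩ := isCompact_univ.ultrafilter_le_nhds (U.map (fun p : Z × Z => E p.1))
      (by simp)
    have hT1 : Filter.Tendsto E ↑(U.map Prod.fst) (𝓝 m) := by
      rw [Ultrafilter.coe_map, Filter.tendsto_map'_iff]
      exact hm
    have hT2 : Filter.Tendsto E ↑(U.map Prod.snd) (𝓝 m) := by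
      rw [Ultrafilter.coe_map, Filter.tendsto_map'_iff]
      have hm' : Filter.Tendsto (fun p : Z × Z => E p.1) ↑U (𝓝 m) := hm
      refine hm'.congr' ?_
      filter_upwards [hQ] with p hp
      exact hp.2.2
    have hVx' : ↑(U.map Prod.fst) ≤ 𝓝 x := by rw [Ultrafilter.coe_map]; exact hUx
    have hVy' : ↑(U.map Prod.snd) ≤ 𝓝 y := by rw [Ultrafilter.coe_map]; exact hUy
    rcases H (U.map Prod.fst) x m hCV1 hVx' hT1 with ⟨hxC, hmx⟩ | rfl
    · rcases H (U.map Prod.snd) y m hCV2 hVy' hT2 with ⟨hyC, hmy⟩ | rfl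
      · exact Or.inr (Or.inl ⟨hxC, hyC, hmx ▸ hmy ▸ rfl⟩)
      · exact Or.inr (Or.inr (Or.inl ⟨hxC, hmx⟩))
    · rcases H (U.map Prod.snd) y x hCV2 hVy' hT2 with ⟨hyC, hmy⟩ | rfl
      · exact Or.inr (Or.inr (Or.inr ⟨hyC, hmy⟩))
      · exact Or.inl rfl
  rcases (Ultrafilter.union_mem_iff.mp hrest2) with hP | hP'
  · -- pair case (c, E c)
    have hCV : C ∈ U.map Prod.fst := by
      rw [Ultrafilter.mem_map]; exact Filter.mem_of_superset hP fun p hp => hp.1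
    have hVx' : ↑(U.map Prod.fst) ≤ 𝓝 x := by rw [Ultrafilter.coe_map]; exact hUx
    have hTy : Filter.Tendsto E ↑(U.map Prod.fst) (𝓝 y) := by
      rw [Ultrafilter.coe_map, Filter.tendsto_map'_iff]
      refine hUy.congr' ?_
      filter_upwards [hP] with p hp
      exact hp.2
    rcases H (U.map Prod.fst) x y hCV hVx' hTy with ⟨hxC, hyx⟩ | rfl
    · exact Or.inr (Or.inr (Or.inl ⟨hxC, hyx⟩))
    · exact Or.inl rfl
  · -- pair case (E c, c)
    have hCV : C ∈ U.map Prod.snd := by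
      rw [Ultrafilter.mem_map]; exact Filter.mem_of_superset hP' fun p hp => hp.1
    have hVy' : ↑(U.map Prod.snd) ≤ 𝓝 y := by rw [Ultrafilter.coe_map]; exact hUy
    have hTx : Filter.Tendsto E ↑(U.map Prod.snd) (𝓝 x) := by
      rw [Ultrafilter.coe_map, Filter.tendsto_map'_iff]
      refine hUx.congr' ?_
      filter_upwards [hP'] with p hp
      exact hp.2
    rcases H (U.map Prod.snd) y x hCV hVy' hTx with ⟨hyC, hxy⟩ | rfl
    · exact Or.inr (Or.inr (Or.inr ⟨hyC, hxy⟩))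
    · exact Or.inl rfl

theorem bij_offC {C : Set Z} {E : Z → Z} (hE : ∀ c ∈ C, E c ∉ C) :
    Function.Bijective (fun z : ↥(Cᶜ) => Quotient.mk (setoidOf C E hE) ↑z) := by
  constructor
  · rintro ⟨z, hz⟩ ⟨w, hw⟩ h
    have hr : relOf C E z w := (setoidOf_rel_iff hE).mp h
    rcases hr with h | ⟨h1, -, -⟩ | ⟨h1, -⟩ | ⟨h2, -⟩
    · exact Subtype.ext h
    · exact absurd h1 hz
    · exact absurd h1 hz
    · exact absurd h2 hw
  · intro k
    obtain ⟨z, rfl⟩ := Quot.exists_rep k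
    by_cases hz : z ∈ C
    · refine ⟨⟨E z, hE z hz⟩, ?_⟩
      exact Quotient.sound (Or.inr (Or.inr (Or.inr ⟨hz, rfl⟩)))
    · exact ⟨⟨z, hz⟩, rfl⟩

end Machine2
section PiSect

set_option linter.unusedSectionVars false

variable {ι : Type u} {Yi : ι → Type u} [∀ i, TopologicalSpace (Yi i)]
  [∀ i, CompactSpace (Yi i)] [∀ i, T2Space (Yi i)]

theorem aux_coord {E : (∀ i, Yi i) → (∀ i, Yi i)} {V : Ultrafilter (∀ i, Yi i)}
    {x y : ∀ i, Yi i} (hVx : ↑V ≤ 𝓝 x) (hVy : Filter.Tendsto E ↑V (𝓝 y))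
    (h : ∀ i, {z : ∀ j, Yi j | E z i = z i} ∈ V) : x = y := by
  funext i
  have h1 : Filter.Tendsto (fun z : ∀ j, Yi j => z i) ↑V (𝓝 (x i)) :=
    ((continuous_apply i).tendsto x).mono_left hVx
  have h2 : Filter.Tendsto (fun z : ∀ j, Yi j => E z i) ↑V (𝓝 (y i)) :=
    ((continuous_apply i).tendsto y).comp hVy
  have heq : (fun z : ∀ j, Yi j => E z i) =ᶠ[↑V] (fun z : ∀ j, Yi j => z i) := by
    filter_upwards [h i] with z hz
    exact hz
  exact tendsto_nhds_unique h1 (h2.congr' heq)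

theorem exists_partner (a b : ∀ i, Yi i) (hab : ∀ i, a i ≠ b i)
    (u : ι → ι) (hu : Function.Injective u) (c : ∀ i, Yi i)
    (bad : Set (∀ i, Yi i)) (hbad : #bad < 2 ^ #ι) :
    ∃ d : ∀ i, Yi i, d ∉ bad ∧ ∀ i, (∀ j, u j ≠ i) → d i = c i := by
  classical
  set φ : Set ι → (∀ i, Yi i) := fun s i =>
    if i ∈ u '' s then a i else if i ∈ Set.range u then b i else c i with hφ
  have hφc : ∀ s i, (∀ j, u j ≠ i) → φ s i = c i := by
    intro s i hi
    have h1 : i ∉ u '' s := by rintro ⟨j, -, hj⟩; exact hi j hj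
    have h2 : i ∉ Set.range u := by rintro ⟨j, hj⟩; exact hi j hj
    show (if i ∈ u '' s then a i else if i ∈ Set.range u then b i else c i) = c i
    rw [if_neg h1, if_neg h2]
  have hφinj : Function.Injective φ := by
    intro s t hst
    ext j
    constructor
    · intro hjs
      by_contra hjt
      have h1 : φ s (u j) = a (u j) := if_pos (Set.mem_image_of_mem u hjs)
      have h2 : φ t (u j) = b (u j) := by
        have hnt : u j ∉ u '' t := by rintro ⟨k, hk, hkj⟩; exact hjt (hu hkj ▸ hk)
        show (if u j ∈ u '' t then a (u j) else if u j ∈ Set.range u then b (u j) else c (u j)) = b (u j)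
        rw [if_neg hnt, if_pos (Set.mem_range_self j)]
      exact hab (u j) (h1 ▸ h2 ▸ congrFun hst (u j))
    · intro hjt
      by_contra hjs
      have h1 : φ t (u j) = a (u j) := if_pos (Set.mem_image_of_mem u hjt)
      have h2 : φ s (u j) = b (u j) := by
        have hns : u j ∉ u '' s := by rintro ⟨k, hk, hkj⟩; exact hjs (hu hkj ▸ hk)
        show (if u j ∈ u '' s then a (u j) else if u j ∈ Set.range u then b (u j) else c (u j)) = b (u j)
        rw [if_neg hns, if_pos (Set.mem_range_self j)]
      exact hab (u j) (h2 ▸ h1 ▸ (congrFun hst (u j)).symm)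
  by_contra hcon
  push_neg at hcon
  have hall : ∀ s : Set ι, φ s ∈ bad := by
    intro s
    by_contra hs
    obtain ⟨i, hi, hne⟩ := hcon (φ s) hs
    exact hne (hφc s i hi)
  have : (2 : Cardinal.{u}) ^ #ι ≤ #bad := by
    rw [← Cardinal.mk_set]
    exact Cardinal.mk_le_of_injective (f := fun s : Set ι => (⟨φ s, hall s⟩ : ↥bad))
      fun s t hst => hφinj (congrArg Subtype.val hst)
  exact absurd (this.trans_lt hbad) (lt_irrefl _)

end PiSect
section Main

set_option linter.unusedSectionVars false
set_option maxHeartbeats 1000000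

variable {ι : Type u} {Yi : ι → Type u} [∀ i, TopologicalSpace (Yi i)]
  [∀ i, CompactSpace (Yi i)] [∀ i, T2Space (Yi i)]

theorem prod_core (hι : ℵ₀ ≤ #ι) (a b : ∀ i, Yi i) (hab : ∀ i, a i ≠ b i)
    (C₀ : Set (∀ i, Yi i)) (hC₀ : #C₀ ≤ #ι) :
    ∃ (Y' : Type u) (_ : TopologicalSpace Y'),
      (CompactSpace Y' ∧ T2Space Y' ∧ ∀ C' : Set Y', #C' ≤ #ι →
        ∃ (K : Type u) (_ : TopologicalSpace K), CompactSpace K ∧ T2Space K ∧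
          ∃ g : Y' → K, Continuous g ∧ Function.Bijective fun x : ↥(C'ᶜ) => g x) ∧
      ∃ q : (∀ i, Yi i) → Y', Continuous q ∧
        Function.Bijective fun z : ↥(C₀ᶜ) => q z := by
  classical
  have hpow : ∀ bad : Set (∀ i, Yi i), #bad ≤ #ι → #bad < 2 ^ #ι :=
    fun bad h => h.trans_lt (Cardinal.cantor _)
  obtain ⟨ε⟩ : Nonempty ((ι ⊕ ι) ↪ ι) := by
    rw [← Cardinal.le_def]
    simp only [Cardinal.mk_sum, Cardinal.lift_id]
    exact le_of_eq (Cardinal.add_eq_self hι)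
  obtain ⟨j₁⟩ : Nonempty ((↥C₀ × ι) ↪ ι) := by
    rw [← Cardinal.le_def]
    simp only [Cardinal.mk_prod, Cardinal.lift_id]
    calc #C₀ * #ι ≤ #ι * #ι := mul_le_mul_left hC₀ _
      _ = #ι := Cardinal.mul_eq_self hι
  set u₁ : ↥C₀ → ι → ι := fun c p => ε (Sum.inl (j₁ (c, p))) with hu₁def
  have hu₁inj : ∀ c, Function.Injective (u₁ c) := by
    intro c p p' h
    have := j₁.injective (Sum.inl.inj (ε.injective h))
    exact congrArg Prod.snd this
  have hu₁cross : ∀ c c' p p', u₁ c p = u₁ c' p' → c = c' := by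
    intro c c' p p' h
    have := j₁.injective (Sum.inl.inj (ε.injective h))
    exact congrArg Prod.fst this
  choose d hd1 hd2 using fun c : ↥C₀ =>
    exists_partner a b hab (u₁ c) (hu₁inj c) (c : ∀ i, Yi i) C₀ (hpow C₀ hC₀)
  set E₁ : (∀ i, Yi i) → (∀ i, Yi i) := fun z => if h : z ∈ C₀ then d ⟨z, h⟩ else z
    with hE₁def
  have hE₁val : ∀ z (h : z ∈ C₀), E₁ z = d ⟨z, h⟩ := by
    intro z h; simp only [hE₁def]; rw [dif_pos h]
  have hE₁val' : ∀ z, z ∉ C₀ → E₁ z = z := by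
    intro z h; simp only [hE₁def]; rw [dif_neg h]
  have hE₁ : ∀ c ∈ C₀, E₁ c ∉ C₀ := by
    intro c hc; rw [hE₁val c hc]; exact hd1 _
  have H₁ : ∀ (V : Ultrafilter (∀ i, Yi i)) (x y : ∀ i, Yi i), C₀ ∈ V → ↑V ≤ 𝓝 x →
      Filter.Tendsto E₁ ↑V (𝓝 y) → (x ∈ C₀ ∧ y = E₁ x) ∨ x = y := by
    intro V x y hCV hVx hVy
    by_cases hsing : ∃ c : (∀ i, Yi i), {c} ∈ V
    · obtain ⟨c, hc⟩ := hsing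
      obtain ⟨rfl, hcC, rfl⟩ := aux_principal hc hCV hVx hVy
      exact Or.inl ⟨hcC, rfl⟩
    · push_neg at hsing
      refine Or.inr (aux_coord hVx hVy ?_)
      intro i
      by_cases howner : ∃ c : ↥C₀, ∃ p, u₁ c p = i
      · obtain ⟨c₀, p₀, hp₀⟩ := howner
        refine Filter.mem_of_superset
          ((Ultrafilter.compl_mem_iff_notMem).mpr (hsing c₀.1)) ?_
        intro z hz
        show E₁ z i = z i
        by_cases hzC : z ∈ C₀
        · rw [hE₁val z hzC]
          refine hd2 ⟨z, hzC⟩ i ?_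
          intro p hp
          have : (⟨z, hzC⟩ : ↥C₀) = c₀ := hu₁cross _ _ _ _ (hp.trans hp₀.symm)
          exact hz (congrArg Subtype.val this)
        · rw [hE₁val' z hzC]
      · refine Filter.univ_mem' ?_
        intro z
        show E₁ z i = z i
        by_cases hzC : z ∈ C₀
        · rw [hE₁val z hzC]
          exact hd2 ⟨z, hzC⟩ i (fun p hp => howner ⟨⟨z, hzC⟩, p, hp⟩)
        · rw [hE₁val' z hzC]
  set S₁ : Setoid (∀ i, Yi i) := setoidOf C₀ E₁ hE₁ with hS₁def
  have hS₁closed : IsClosed {p : (∀ i, Yi i) × (∀ i, Yi i) | S₁.r p.1 p.2} :=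
    relOf_isClosed H₁
  haveI hT2Y' : T2Space (Quotient S₁) := t2_quotient_of_isClosed S₁ hS₁closed
  set q : (∀ i, Yi i) → Quotient S₁ := Quotient.mk S₁ with hqdef
  have hqcont : Continuous q := continuous_quot_mk
  have hqbij : Function.Bijective fun z : ↥(C₀ᶜ) => q z := bij_offC hE₁
  have hqrel : ∀ z w, q z = q w ↔ relOf C₀ E₁ z w := fun z w => setoidOf_rel_iff hE₁
  refine ⟨Quotient S₁, inferInstance, ⟨inferInstance, hT2Y', ?_⟩, q, hqcont, hqbij⟩
  -- Level 2
  intro C' hC'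
  set r : Quotient S₁ → ↥(C₀ᶜ) := Function.surjInv hqbij.2 with hrdef
  have hr1 : ∀ k, q ((r k) : ∀ i, Yi i) = k := fun k => Function.surjInv_eq hqbij.2 k
  have hrz : ∀ z, (hz : z ∉ C₀) → ((r (q z)) : ∀ i, Yi i) = z := by
    intro z hz
    have : r (q z) = (⟨z, hz⟩ : ↥(C₀ᶜ)) := hqbij.1 (by show q _ = q _; rw [hr1])
    exact congrArg Subtype.val this
  have hqE : ∀ z ∈ C₀, q (E₁ z) = q z := by
    intro z hz
    exact (hqrel _ _).mpr (Or.inr (Or.inr (Or.inr ⟨hz, rfl⟩)))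
  have hrE : ∀ z, (hz : z ∈ C₀) → ((r (q z)) : ∀ i, Yi i) = E₁ z := by
    intro z hz
    rw [← hqE z hz, hrz (E₁ z) (hE₁ z hz)]
  set C₂ : Set (∀ i, Yi i) := q ⁻¹' C' ∪ C₀ with hC₂def
  have hC₂card : #C₂ ≤ #ι := by
    have h1 : q ⁻¹' C' ⊆ C₀ ∪ Set.range (fun k : ↥C' => ((r (k : Quotient S₁)) : ∀ i, Yi i)) := by
      intro z hz
      by_cases hzC : z ∈ C₀
      · exact Or.inl hzC
      · exact Or.inr ⟨⟨q z, hz⟩, hrz z hzC⟩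
    have h2 : #(q ⁻¹' C' : Set (∀ i, Yi i)) ≤ #ι := by
      calc #(q ⁻¹' C' : Set (∀ i, Yi i))
          ≤ #((C₀ ∪ Set.range fun k : ↥C' => ((r (k : Quotient S₁)) : ∀ i, Yi i)) : Set (∀ i, Yi i)) :=
            Cardinal.mk_le_mk_of_subset h1
        _ ≤ #C₀ + #(Set.range fun k : ↥C' => ((r (k : Quotient S₁)) : ∀ i, Yi i)) :=
            Cardinal.mk_union_le _ _
        _ ≤ #C₀ + #C' := by
            gcongr
            exact Cardinal.mk_range_le
        _ ≤ #ι := Cardinal.add_le_of_le hι hC₀ hC'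
    calc #C₂ ≤ #(q ⁻¹' C' : Set (∀ i, Yi i)) + #C₀ := Cardinal.mk_union_le _ _
      _ ≤ #ι := Cardinal.add_le_of_le hι h2 hC₀
  obtain ⟨j₂⟩ : Nonempty ((↥C' × ι) ↪ ι) := by
    rw [← Cardinal.le_def]
    simp only [Cardinal.mk_prod, Cardinal.lift_id]
    calc #C' * #ι ≤ #ι * #ι := mul_le_mul_left hC' _
      _ = #ι := Cardinal.mul_eq_self hι
  set u₂ : ↥C' → ι → ι := fun k p => ε (Sum.inr (j₂ (k, p))) with hu₂def
  have hu₂inj : ∀ k, Function.Injective (u₂ k) := by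
    intro k p p' h
    have := j₂.injective (Sum.inr.inj (ε.injective h))
    exact congrArg Prod.snd this
  have hu₂cross : ∀ k k' p p', u₂ k p = u₂ k' p' → k = k' := by
    intro k k' p p' h
    have := j₂.injective (Sum.inr.inj (ε.injective h))
    exact congrArg Prod.fst this
  choose e he1 he2 using fun k : ↥C' =>
    exists_partner a b hab (u₂ k) (hu₂inj k) ((r (k : Quotient S₁)) : ∀ i, Yi i)
      C₂ (hpow C₂ hC₂card)
  set E₂ : (∀ i, Yi i) → (∀ i, Yi i) := fun z => if h : q z ∈ C' then e ⟨q z, h⟩ else E₁ z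
    with hE₂def
  have hE₂val : ∀ z (h : q z ∈ C'), E₂ z = e ⟨q z, h⟩ := by
    intro z h; simp only [hE₂def]; rw [dif_pos h]
  have hE₂val' : ∀ z, q z ∉ C' → E₂ z = E₁ z := by
    intro z h; simp only [hE₂def]; rw [dif_neg h]
  have hE₂ : ∀ z ∈ C₂, E₂ z ∉ C₂ := by
    intro z hz
    by_cases hq : q z ∈ C'
    · rw [hE₂val z hq]; exact he1 _
    · rw [hE₂val' z hq]
      rcases hz with hz | hz
      · exact absurd hz hq
      · rintro (hmem | hmem)
        · exact hq (by rwa [Set.mem_preimage, hqE z hz] at hmem)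
        · exact hE₁ z hz hmem
  have H₂ : ∀ (V : Ultrafilter (∀ i, Yi i)) (x y : ∀ i, Yi i), C₂ ∈ V → ↑V ≤ 𝓝 x →
      Filter.Tendsto E₂ ↑V (𝓝 y) → (x ∈ C₂ ∧ y = E₂ x) ∨ x = y := by
    intro V x y hCV hVx hVy
    by_cases hsing : ∃ c : (∀ i, Yi i), {c} ∈ V
    · obtain ⟨c, hc⟩ := hsing
      obtain ⟨rfl, hcC, rfl⟩ := aux_principal hc hCV hVx hVy
      exact Or.inl ⟨hcC, rfl⟩
    · push_neg at hsing
      by_cases hfib : ∃ k : ↥C', q ⁻¹' {(k : Quotient S₁)} ∈ V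
      · obtain ⟨k, hk⟩ := hfib
        have hyek : y = e k := by
          have heq : E₂ =ᶠ[↑V] fun _ => e k := by
            filter_upwards [hk] with z hz
            have hqz : q z = (k : Quotient S₁) := hz
            have h1 : q z ∈ C' := by rw [hqz]; exact k.2
            rw [hE₂val z h1]
            exact congrArg e (Subtype.ext hqz)
          exact tendsto_nhds_unique (hVy.congr' heq) tendsto_const_nhds
        have hxfib : q x = (k : Quotient S₁) := by
          have hcl : IsClosed (q ⁻¹' {(k : Quotient S₁)}) :=
            isClosed_singleton.preimage hqcont
          have := mem_closure_iff_ultrafilter.mpr ⟨V, hk, hVx⟩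
          rwa [hcl.closure_eq] at this
        have hqx : q x ∈ C' := by rw [hxfib]; exact k.2
        refine Or.inl ⟨Or.inl hqx, ?_⟩
        rw [hE₂val x hqx, hyek]
        exact congrArg e (Subtype.ext hxfib.symm)
      · push_neg at hfib
        refine Or.inr (aux_coord hVx hVy ?_)
        intro i
        have hgood1 : {z : ∀ j, Yi j | ∀ hz : z ∈ C₀, ∀ p, u₁ ⟨z, hz⟩ p ≠ i} ∈ V := by
          by_cases howner : ∃ c : ↥C₀, ∃ p, u₁ c p = i
          · obtain ⟨c₀, p₀, hp₀⟩ := howner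
            refine Filter.mem_of_superset
              ((Ultrafilter.compl_mem_iff_notMem).mpr (hsing c₀.1)) ?_
            intro z hz hzC p hp
            have : (⟨z, hzC⟩ : ↥C₀) = c₀ := hu₁cross _ _ _ _ (hp.trans hp₀.symm)
            exact hz (congrArg Subtype.val this)
          · exact Filter.univ_mem' (fun z hzC p hp => howner ⟨⟨z, hzC⟩, p, hp⟩)
        have hgood2 : {z : ∀ j, Yi j | ∀ h : q z ∈ C', ∀ p, u₂ ⟨q z, h⟩ p ≠ i} ∈ V := by
          by_cases howner : ∃ k₀ : ↥C', ∃ p, u₂ k₀ p = i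
          · obtain ⟨k₀, p₀, hp₀⟩ := howner
            refine Filter.mem_of_superset
              ((Ultrafilter.compl_mem_iff_notMem).mpr (hfib k₀)) ?_
            intro z hz h p hp
            have : (⟨q z, h⟩ : ↥C') = k₀ := hu₂cross _ _ _ _ (hp.trans hp₀.symm)
            exact hz (congrArg Subtype.val this)
          · exact Filter.univ_mem' (fun z h p hp => howner ⟨⟨q z, h⟩, p, hp⟩)
        refine Filter.mem_of_superset (Filter.inter_mem hgood1 hgood2) ?_
        rintro z ⟨hz1, hz2⟩
        show E₂ z i = z i
        have hE₁eq : E₁ z i = z i := by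
          by_cases hzC : z ∈ C₀
          · rw [hE₁val z hzC]; exact hd2 ⟨z, hzC⟩ i (hz1 hzC)
          · rw [hE₁val' z hzC]
        by_cases hq : q z ∈ C'
        · rw [hE₂val z hq]
          have h2 : e ⟨q z, hq⟩ i = ((r (q z)) : ∀ j, Yi j) i := he2 ⟨q z, hq⟩ i (hz2 hq)
          rw [h2]
          by_cases hzC : z ∈ C₀
          · rw [hrE z hzC]; exact hE₁eq
          · rw [hrz z hzC]
        · rw [hE₂val' z hq]; exact hE₁eq
  set S₂ : Setoid (∀ i, Yi i) := setoidOf C₂ E₂ hE₂ with hS₂def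
  have hS₂closed : IsClosed {p : (∀ i, Yi i) × (∀ i, Yi i) | S₂.r p.1 p.2} :=
    relOf_isClosed H₂
  haveI hT2K : T2Space (Quotient S₂) := t2_quotient_of_isClosed S₂ hS₂closed
  set q₂ : (∀ i, Yi i) → Quotient S₂ := Quotient.mk S₂ with hq₂def
  have hq₂rel : ∀ z w, q₂ z = q₂ w ↔ relOf C₂ E₂ z w := fun z w => setoidOf_rel_iff hE₂
  have hcompat : ∀ z w, relOf C₀ E₁ z w → relOf C₂ E₂ z w := by
    intro z w h
    rcases h with rfl | ⟨hz, hw, hzw⟩ | ⟨hz, rfl⟩ | ⟨hw, rfl⟩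
    · exact Or.inl rfl
    · have hqzw : q z = q w := (hqrel _ _).mpr (Or.inr (Or.inl ⟨hz, hw, hzw⟩))
      by_cases hqz : q z ∈ C'
      · have hqw : q w ∈ C' := hqzw ▸ hqz
        refine Or.inr (Or.inl ⟨Or.inl hqz, Or.inl hqw, ?_⟩)
        rw [hE₂val z hqz, hE₂val w hqw]
        exact congrArg e (Subtype.ext hqzw)
      · have hqw : q w ∉ C' := hqzw ▸ hqz
        refine Or.inr (Or.inl ⟨Or.inr hz, Or.inr hw, ?_⟩)
        rw [hE₂val' z hqz, hE₂val' w hqw, hzw]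
    · by_cases hqz : q z ∈ C'
      · have hqw : q (E₁ z) ∈ C' := by rwa [hqE z hz]
        refine Or.inr (Or.inl ⟨Or.inl hqz, Or.inl hqw, ?_⟩)
        rw [hE₂val z hqz, hE₂val _ hqw]
        exact congrArg e (Subtype.ext (hqE z hz).symm)
      · refine Or.inr (Or.inr (Or.inl ⟨Or.inr hz, ?_⟩))
        rw [hE₂val' z hqz]
    · by_cases hqw : q w ∈ C'
      · have hqz : q (E₁ w) ∈ C' := by rwa [hqE w hw]
        refine Or.inr (Or.inl ⟨Or.inl hqz, Or.inl hqw, ?_⟩)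
        rw [hE₂val w hqw, hE₂val _ hqz]
        exact congrArg e (Subtype.ext (hqE w hw))
      · refine Or.inr (Or.inr (Or.inr ⟨Or.inr hw, ?_⟩))
        rw [hE₂val' w hqw]
  set g : Quotient S₁ → Quotient S₂ :=
    Quotient.lift (s := S₁) q₂ (fun z w h => (hq₂rel z w).mpr (hcompat z w h)) with hgdef
  have hgq : ∀ z, g (q z) = q₂ z := fun z => rfl
  have hgcont : Continuous g := by
    apply Continuous.quotient_lift
    exact continuous_quot_mk
  refine ⟨Quotient S₂, inferInstance, inferInstance, hT2K, g, hgcont, ?_, ?_⟩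
  · -- injective
    rintro ⟨v, hv⟩ ⟨w, hw⟩ h
    have hzv : q ((r v) : ∀ i, Yi i) = v := hr1 v
    have hzw : q ((r w) : ∀ i, Yi i) = w := hr1 w
    have h2 : q₂ ((r v) : ∀ i, Yi i) = q₂ ((r w) : ∀ i, Yi i) := by
      have e1 : q₂ ((r v) : ∀ i, Yi i) = g v := (hgq _).symm.trans (congrArg g hzv)
      have e2 : q₂ ((r w) : ∀ i, Yi i) = g w := (hgq _).symm.trans (congrArg g hzw)
      rw [e1, e2]
      exact h
    have hrel := (hq₂rel _ _).mp h2
    have hnv : ((r v) : ∀ i, Yi i) ∉ C₂ := by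
      rintro (hm | hm)
      · exact hv (by rwa [Set.mem_preimage, hzv] at hm)
      · exact (r v).2 hm
    have hnw : ((r w) : ∀ i, Yi i) ∉ C₂ := by
      rintro (hm | hm)
      · exact hw (by rwa [Set.mem_preimage, hzw] at hm)
      · exact (r w).2 hm
    rcases hrel with heq | ⟨h1, -, -⟩ | ⟨h1, -⟩ | ⟨h1, -⟩
    · exact Subtype.ext (hzv.symm.trans ((congrArg q heq).trans hzw))
    · exact absurd h1 hnv
    · exact absurd h1 hnv
    · exact absurd h1 hnw
  · -- surjective
    intro k
    obtain ⟨z, rfl⟩ := Quot.exists_rep k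
    have hmkz : Quot.mk Setoid.r z = q₂ z := rfl
    rw [hmkz]
    by_cases h1 : q z ∈ C'
    · have hmem : q (e ⟨q z, h1⟩) ∉ C' := by
        intro hmem
        exact he1 ⟨q z, h1⟩ (Or.inl hmem)
      refine ⟨⟨q (e ⟨q z, h1⟩), hmem⟩, ?_⟩
      show g (q (e ⟨q z, h1⟩)) = q₂ z
      rw [hgq]
      refine ((hq₂rel _ _).mpr ?_)
      refine Or.inr (Or.inr (Or.inr ⟨Or.inl h1, ?_⟩))
      rw [hE₂val z h1]
    · by_cases h2 : z ∈ C₀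
      · have hqEz : q (E₁ z) = q z := hqE z h2
        have hmem : q (E₁ z) ∉ C' := by rwa [hqEz]
        refine ⟨⟨q (E₁ z), hmem⟩, ?_⟩
        show g (q (E₁ z)) = q₂ z
        rw [hgq]
        refine ((hq₂rel _ _).mpr ?_)
        refine Or.inr (Or.inr (Or.inr ⟨Or.inr h2, ?_⟩))
        rw [hE₂val' z h1]
      · exact ⟨⟨q z, h1⟩, rfl⟩

end Main

/-- a product of `τ` many nontrivial subcompact Hausdorff spaces is
strictly `a_τ`-subcompact. -/
theorem stmt_16 (τ : Cardinal.{u}) (hτ : ℵ₀ ≤ τ)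
    (ι : Type u) (hι : #ι = τ)
    (Xa : ι → Type u) [∀ i, TopologicalSpace (Xa i)] [∀ i, T2Space (Xa i)]
    (hnt : ∀ i, Nontrivial (Xa i)) (hsub : ∀ i, Subcompact (Xa i)) :
    StrictATauSubcompact τ (∀ i, Xa i) := by
  intro C hC
  choose Y tY hcomp ht2 f hf hbij using hsub
  letI := tY
  haveI : ∀ i, CompactSpace (Y i) := hcomp
  haveI : ∀ i, T2Space (Y i) := ht2
  have hnt' : ∀ i, ∃ p q' : Y i, p ≠ q' := by
    intro i
    obtain ⟨x, y, hxy⟩ := (hnt i).exists_pair_ne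
    exact ⟨f i x, f i y, fun h => hxy ((hbij i).1 h)⟩
  choose a b hab using hnt'
  set h : (∀ i, Xa i) → (∀ i, Y i) := fun x i => f i (x i) with hhdef
  have hhcont : Continuous h := continuous_pi fun i => (hf i).comp (continuous_apply i)
  have hhinj : Function.Injective h := fun x y hxy =>
    funext fun i => (hbij i).1 (congrFun hxy i)
  have hhsurj : Function.Surjective h := fun z =>
    ⟨fun i => Function.surjInv (hbij i).2 (z i),
      funext fun i => Function.surjInv_eq (hbij i).2 (z i)⟩
  set C₀ : Set (∀ i, Y i) := h '' C with hC₀def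
  have hℵ : ℵ₀ ≤ #ι := by rw [hι]; exact hτ
  have hC₀card : #C₀ ≤ #ι := by
    rw [hι]
    exact Cardinal.mk_image_le.trans hC
  obtain ⟨Y', tY', ⟨hcY', ht2Y', hstrict⟩, q, hqcont, hqbij⟩ :=
    prod_core hℵ a b hab C₀ hC₀card
  refine ⟨Y', tY', ⟨hcY', ht2Y', ?_⟩, fun x => q (h x), hqcont.comp hhcont, ?_, ?_⟩
  · intro C' hC'
    exact hstrict C' (by rw [hι]; exact hC')
  · rintro ⟨x, hx⟩ ⟨y, hy⟩ hxy
    have hhx : h x ∉ C₀ := fun ⟨c, hc, hce⟩ => hx (hhinj hce ▸ hc)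
    have hhy : h y ∉ C₀ := fun ⟨c, hc, hce⟩ => hy (hhinj hce ▸ hc)
    have := hqbij.1 (a₁ := ⟨h x, hhx⟩) (a₂ := ⟨h y, hhy⟩) hxy
    exact Subtype.ext (hhinj (congrArg Subtype.val this))
  · intro k
    obtain ⟨⟨w, hw⟩, hkw⟩ := hqbij.2 k
    obtain ⟨x, rfl⟩ := hhsurj w
    have hx : x ∉ C := fun hxC => hw ⟨x, hxC, rfl⟩
    exact ⟨⟨x, hx⟩, hkw⟩
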